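/- Define Ext_DBdC(𝒜): B ∈ Ext_DBdC(𝒜) iff either some f ∈ B has f ⪈ 0, or there exist A₁,…,Aₙ ∈ 𝒜 such that for each (g₁,…,gₙ) ∈ A₁×…×Aₙ with 0 ∉ desext({g₁,…,gₙ}), there exist f ∈ B and h ∈ posi({g₁,…,gₙ}) with f ≥ h. Then for nonempty 𝒜, Ext_DBdC(𝒜) = Ext(𝒜), where B ∈ Ext(𝒜) iff there exist A₁,…,Aₙ ∈ 𝒜 such that for each (g₁,…,gₙ) ∈ A₁×…×Aₙ with 0 ∉ desext({g₁,…,gₙ}), some f ∈ B lies in desext({g₁,…,gₙ}). -/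

import Mathlib

open scoped BigOperators

universe u v

def GambleSpace (Ω : Type v) : Submodule ℝ (Ω → ℝ) where
  carrier := {f | ∃ M, ∀ ω, |f ω| ≤ M}
  add_mem' := by
    rintro f g ⟨M, hM⟩ ⟨N, hN⟩
    exact ⟨M + N, fun ω => (abs_add_le _ _).trans (add_le_add (hM ω) (hN ω))⟩
  zero_mem' := ⟨0, fun ω => by simp⟩
  smul_mem' := by
    rintro c f ⟨M, hM⟩
    exact ⟨|c| * M, fun ω => by
      simpa [abs_mul] using mul_le_mul_of_nonneg_left (hM ω) (abs_nonneg c)⟩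

/-- The type of gambles: bounded functions `Ω → ℝ`. -/
abbrev Gamble (Ω : Type v) := GambleSpace Ω

/-- Pointwise order on gambles: `gle f g` means `f ≤ g` pointwise. -/
def gle {Ω : Type v} (f g : Gamble Ω) : Prop := ∀ ω, (f : Ω → ℝ) ω ≤ (g : Ω → ℝ) ω

/-- Gambles weakly dominating `0`. -/
def Gpos (Ω : Type v) : Set (Gamble Ω) := {g | gle 0 g ∧ g ≠ 0}

/-- Positive linear hull: finite positive combinations of members of `B`. -/
def posi {Ω : Type v} (B : Set (Gamble Ω)) : Set (Gamble Ω) :=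
  {f | ∃ n : ℕ, 0 < n ∧ ∃ (l : Fin n → ℝ) (g : Fin n → Gamble Ω),
    (∀ i, 0 < l i) ∧ (∀ i, g i ∈ B) ∧ f = ∑ i, l i • g i}

/-- Natural extension of a set of gambles. -/
def desext {Ω : Type v} (E : Set (Gamble Ω)) : Set (Gamble Ω) := posi (E ∪ Gpos Ω)

/-- Coherence for a set of desirable gambles. -/
def CoherentD {Ω : Type v} (D : Set (Gamble Ω)) : Prop :=
  (0 : Gamble Ω) ∉ D ∧ Gpos Ω ⊆ D ∧
  (∀ g ∈ D, ∀ l : ℝ, 0 < l → l • g ∈ D) ∧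
  (∀ f ∈ D, ∀ g ∈ D, f + g ∈ D)

/-- Coherence for a set of desirable gamble sets. -/
def CoherentK {Ω : Type v} (K : Set (Set (Gamble Ω))) : Prop :=
  (∅ : Set (Gamble Ω)) ∉ K ∧
  (∀ A ∈ K, A \ {0} ∈ K) ∧
  (∀ g ∈ Gpos Ω, ({g} : Set (Gamble Ω)) ∈ K) ∧
  (∀ A ∈ K, ∀ B : Set (Gamble Ω), A ⊆ B → B ∈ K) ∧
  (∀ A ∈ K, ∀ F : Gamble Ω → Gamble Ω, (∀ g ∈ A, gle g (F g)) → F '' A ∈ K) ∧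
  (∀ n : ℕ, 0 < n → ∀ A : Fin n → Set (Gamble Ω), (∀ i, A i ∈ K) →
    ∀ F : (Fin n → Gamble Ω) → Gamble Ω,
    (∀ g : Fin n → Gamble Ω, (∀ i, g i ∈ A i) → F g ∈ posi (Set.range g)) →
    {b | ∃ g : Fin n → Gamble Ω, (∀ i, g i ∈ A i) ∧ b = F g} ∈ K)

/-- The infinite addition axiom. -/
def KAddInf {Ω : Type v} (K : Set (Set (Gamble Ω))) : Prop :=
  ∀ (I : Type v) (A : I → Set (Gamble Ω)), (∀ i, A i ∈ K) →
    ∀ F : (I → Gamble Ω) → Gamble Ω,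
    (∀ g : I → Gamble Ω, (∀ i, g i ∈ A i) → F g ∈ posi (Set.range g)) →
    {b | ∃ g : I → Gamble Ω, (∀ i, g i ∈ A i) ∧ b = F g} ∈ K

/-- Natural extension of a set of gamble sets (nonempty case). -/
def ExtK {Ω : Type v} (𝒜 : Set (Set (Gamble Ω))) : Set (Set (Gamble Ω)) :=
  {B | ∃ n : ℕ, 0 < n ∧ ∃ A : Fin n → Set (Gamble Ω), (∀ i, A i ∈ 𝒜) ∧
    ∀ g : Fin n → Gamble Ω, (∀ i, g i ∈ A i) →
      (0 : Gamble Ω) ∉ desext (Set.range g) → ∃ f ∈ B, f ∈ desext (Set.range g)}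


section Aux
variable {Ω : Type v}

lemma mem_posi_self {B : Set (Gamble Ω)} {x : Gamble Ω} (hx : x ∈ B) : x ∈ posi B :=
  ⟨1, one_pos, fun _ => 1, fun _ => x, fun _ => one_pos, fun _ => hx, by simp⟩

lemma posi_mono {S T : Set (Gamble Ω)} (h : S ⊆ T) : posi S ⊆ posi T := by
  rintro f ⟨n, hn, l, g, hl, hg, rfl⟩
  exact ⟨n, hn, l, g, hl, fun i => h (hg i), rfl⟩

lemma posi_add_single {B : Set (Gamble Ω)} {f p : Gamble Ω} (hf : f ∈ posi B) (hp : p ∈ B) :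
    f + p ∈ posi B := by
  obtain ⟨n, hn, l, g, hl, hg, rfl⟩ := hf
  refine ⟨n + 1, Nat.succ_pos n, Fin.snoc l 1, Fin.snoc g p, ?_, ?_, ?_⟩
  · intro i
    induction i using Fin.lastCases with
    | last => simp
    | cast j => simpa using hl j
  · intro i
    induction i using Fin.lastCases with
    | last => simpa using hp
    | cast j => simpa using hg j
  · simp [Fin.sum_univ_castSucc]

lemma mem_posi_of_finset {B : Set (Gamble Ω)} {n : ℕ} (s : Finset (Fin n)) (hs : s.Nonempty)
    (l : Fin n → ℝ) (g : Fin n → Gamble Ω) (hl : ∀ i ∈ s, 0 < l i) (hg : ∀ i ∈ s, g i ∈ B) :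
    (∑ i ∈ s, l i • g i) ∈ posi B := by
  classical
  have hcard : 0 < s.card := Finset.card_pos.mpr hs
  refine ⟨s.card, hcard, fun j => l (s.equivFin.symm j), fun j => g (s.equivFin.symm j),
    fun j => hl _ (s.equivFin.symm j).2, fun j => hg _ (s.equivFin.symm j).2, ?_⟩
  rw [← Finset.sum_coe_sort s (fun i => l i • g i)]
  exact (Equiv.sum_comp s.equivFin.symm (fun x : s => l x • g x)).symm

lemma coe_sum_apply {n : ℕ} (l : Fin n → ℝ) (g : Fin n → Gamble Ω) (ω : Ω) :
    ((∑ i, l i • g i : Gamble Ω) : Ω → ℝ) ω = ∑ i, l i * (g i : Ω → ℝ) ω := by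
  simp

lemma posi_Gpos_subset : posi (Gpos Ω) ⊆ Gpos Ω := by
  rintro f ⟨n, hn, l, g, hl, hg, rfl⟩
  have hnonneg : ∀ i (ω : Ω), 0 ≤ (g i : Ω → ℝ) ω := fun i ω => by
    have := (hg i).1 ω; simpa using this
  have key : ∀ ω, (0:ℝ) ≤ ((∑ i, l i • g i : Gamble Ω) : Ω → ℝ) ω := by
    intro ω
    rw [coe_sum_apply]
    exact Finset.sum_nonneg fun i _ => mul_nonneg (hl i).le (hnonneg i ω)
  constructor
  · intro ω; simpa using key ω
  · set i0 : Fin n := ⟨0, hn⟩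
    obtain ⟨ω, hω⟩ : ∃ ω, (g i0 : Ω → ℝ) ω ≠ 0 := by
      by_contra hc
      push_neg at hc
      exact (hg i0).2 (Subtype.ext (funext hc))
    have hpos : 0 < (g i0 : Ω → ℝ) ω := lt_of_le_of_ne (hnonneg i0 ω) (Ne.symm hω)
    have hterm : 0 < l i0 * (g i0 : Ω → ℝ) ω := mul_pos (hl i0) hpos
    have hle : l i0 * (g i0 : Ω → ℝ) ω ≤ ∑ i, l i * (g i : Ω → ℝ) ω :=
      Finset.single_le_sum (fun i _ => mul_nonneg (hl i).le (hnonneg i ω)) (Finset.mem_univ i0)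
    intro h0
    have : ((∑ i, l i • g i : Gamble Ω) : Ω → ℝ) ω = 0 := by rw [h0]; simp
    rw [coe_sum_apply] at this
    linarith

lemma posi_union_decomp {S T : Set (Gamble Ω)} {f : Gamble Ω} (hf : f ∈ posi (S ∪ T)) :
    f ∈ posi T ∨ ∃ h ∈ posi S, ∃ p : Gamble Ω, (p = 0 ∨ p ∈ posi T) ∧ f = h + p := by
  classical
  obtain ⟨n, hn, l, g, hl, hg, rfl⟩ := hf
  set s := Finset.univ.filter (fun i => g i ∈ S) with hs
  have hsplit : ∑ i, l i • g i = (∑ i ∈ s, l i • g i) + ∑ i ∈ sᶜ, l i • g i :=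
    (Finset.sum_add_sum_compl s _).symm
  have hcompl : ∀ i ∈ sᶜ, g i ∈ T := by
    intro i hi
    have hni := Finset.mem_compl.mp hi
    rcases hg i with h1 | h1
    · exact absurd (Finset.mem_filter.mpr ⟨Finset.mem_univ i, h1⟩) hni
    · exact h1
  by_cases hse : s.Nonempty
  · right
    refine ⟨∑ i ∈ s, l i • g i,
      mem_posi_of_finset s hse l g (fun i _ => hl i)
        (fun i hi => (Finset.mem_filter.mp hi).2),
      ∑ i ∈ sᶜ, l i • g i, ?_, hsplit⟩
    by_cases hte : (sᶜ : Finset (Fin n)).Nonempty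
    · exact Or.inr (mem_posi_of_finset _ hte l g (fun i _ => hl i) hcompl)
    · left
      rw [Finset.not_nonempty_iff_eq_empty.mp hte, Finset.sum_empty]
  · left
    have hse' : s = ∅ := Finset.not_nonempty_iff_eq_empty.mp hse
    have huniv : (sᶜ : Finset (Fin n)) = Finset.univ := by rw [hse']; simp
    have : ∑ i, l i • g i = ∑ i ∈ sᶜ, l i • g i := by
      rw [hsplit, hse', Finset.sum_empty, zero_add]
    rw [this]
    have : Nonempty (Fin n) := ⟨⟨0, hn⟩⟩
    exact mem_posi_of_finset _ (by rw [huniv]; exact Finset.univ_nonempty)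
      l g (fun i _ => hl i) hcompl

end Aux

theorem stmt19 {Ω : Type v} [Nonempty Ω] (𝒜 : Set (Set (Gamble Ω))) (h𝒜 : 𝒜.Nonempty) :
    {B : Set (Gamble Ω) |
      (∃ f ∈ B, f ∈ Gpos Ω) ∨
      (∃ n : ℕ, 0 < n ∧ ∃ A : Fin n → Set (Gamble Ω), (∀ i, A i ∈ 𝒜) ∧
        ∀ g : Fin n → Gamble Ω, (∀ i, g i ∈ A i) →
          (0 : Gamble Ω) ∉ desext (Set.range g) →
          ∃ f ∈ B, ∃ h ∈ posi (Set.range g), gle h f)} = ExtK 𝒜 :=  by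
  ext B
  simp only [Set.mem_setOf_eq, ExtK]
  constructor
  · rintro (⟨f, hfB, hfpos⟩ | ⟨n, hn, A, hA, hcond⟩)
    · obtain ⟨A, hA⟩ := h𝒜
      refine ⟨1, one_pos, fun _ => A, fun _ => hA, fun g hg h0 => ?_⟩
      exact ⟨f, hfB, mem_posi_self (Or.inr hfpos)⟩
    · refine ⟨n, hn, A, hA, fun g hg h0 => ?_⟩
      obtain ⟨f, hfB, h, hh, hhf⟩ := hcond g hg h0
      refine ⟨f, hfB, ?_⟩
      by_cases hfe : f = h
      · exact hfe ▸ posi_mono Set.subset_union_left hh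
      · have hsum : f = h + (f - h) := by abel
        have hp : (f - h) ∈ Gpos Ω := by
          constructor
          · intro ω
            have := hhf ω
            simp only [AddSubgroupClass.coe_sub, Pi.sub_apply, ZeroMemClass.coe_zero,
              Pi.zero_apply]
            linarith
          · exact sub_ne_zero.mpr hfe
        rw [hsum]
        exact posi_add_single (posi_mono Set.subset_union_left hh) (Or.inr hp)
  · rintro ⟨n, hn, A, hA, hcond⟩
    by_cases hB : ∃ f ∈ B, f ∈ Gpos Ω
    · exact Or.inl hB
    · refine Or.inr ⟨n, hn, A, hA, fun g hg h0 => ?_⟩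
      obtain ⟨f, hfB, hf⟩ := hcond g hg h0
      rcases posi_union_decomp hf with hfT | ⟨h, hh, p, hp0, hfe⟩
      · exact absurd ⟨f, hfB, posi_Gpos_subset hfT⟩ hB
      · refine ⟨f, hfB, h, hh, fun ω => ?_⟩
        have hpge : 0 ≤ (p : Ω → ℝ) ω := by
          rcases hp0 with rfl | hpT
          · simp
          · have := (posi_Gpos_subset hpT).1 ω
            simpa using this
        rw [hfe]
        simp only [Submodule.coe_add, Pi.add_apply]
        linarith
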